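/- If h and k are positive integers with gcd(h,k) = 1, then s(h,k) + s(k,h) = (h² + k² - 3hk + 1)/(12hk). -/

import Mathlib

noncomputable def dedekindSum (h k : ℤ) : ℝ :=
  ∑ r ∈ Finset.Ico (1 : ℤ) k,
    ((r : ℝ) / k) * ((h * r : ℝ) / k - ⌊(h * r : ℝ) / k⌋ - 1 / 2)

namespace DS

lemma sum_id : ∀ (k : ℤ), 1 ≤ k → 2 * ∑ r ∈ Finset.Ico (1 : ℤ) k, r = k * (k - 1) := by
  refine Int.le_induction ?_ ?_
  · norm_num
  · intro n hn ih
    have e : Finset.Ico (1 : ℤ) (n + 1) = insert n (Finset.Ico 1 n) := by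
      ext x; simp only [Finset.mem_Ico, Finset.mem_insert]; omega
    rw [e, Finset.sum_insert (by simp), mul_add, ih]; ring

lemma sum_sq : ∀ (k : ℤ), 1 ≤ k →
    6 * ∑ r ∈ Finset.Ico (1 : ℤ) k, r ^ 2 = k * (k - 1) * (2 * k - 1) := by
  refine Int.le_induction ?_ ?_
  · norm_num
  · intro n hn ih
    have e : Finset.Ico (1 : ℤ) (n + 1) = insert n (Finset.Ico 1 n) := by
      ext x; simp only [Finset.mem_Ico, Finset.mem_insert]; omega
    rw [e, Finset.sum_insert (by simp), mul_add, ih]; ring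

lemma floor_div (a b : ℤ) (hb : 0 < b) : ⌊(a : ℝ) / (b : ℝ)⌋ = a / b := by
  have hb' : (0 : ℝ) < (b : ℝ) := by exact_mod_cast hb
  have key : (b : ℝ) * ((a / b : ℤ) : ℝ) + ((a % b : ℤ) : ℝ) = (a : ℝ) := by
    exact_mod_cast congrArg (fun z : ℤ => (z : ℝ)) (Int.mul_ediv_add_emod a b)
  have h2 : (0 : ℝ) ≤ ((a % b : ℤ) : ℝ) := by exact_mod_cast Int.emod_nonneg a (ne_of_gt hb)
  have h3 : ((a % b : ℤ) : ℝ) < (b : ℝ) := by exact_mod_cast Int.emod_lt_of_pos a hb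
  rw [Int.floor_eq_iff]
  constructor
  · rw [le_div_iff₀ hb']
    nlinarith
  · rw [div_lt_iff₀ hb']
    nlinarith

variable {h k : ℤ}

lemma emod_mem (hk : 0 < k) (hco : IsCoprime h k) {r : ℤ}
    (hr : r ∈ Finset.Ico (1 : ℤ) k) : (h * r) % k ∈ Finset.Ico (1 : ℤ) k := by
  rw [Finset.mem_Ico] at hr ⊢
  have h1 : 0 ≤ h * r % k := Int.emod_nonneg _ (ne_of_gt hk)
  have h2 : h * r % k < k := Int.emod_lt_of_pos _ hk
  refine ⟨?_, h2⟩
  rcases eq_or_lt_of_le h1 with h0 | h0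
  · exfalso
    have hdvd : k ∣ h * r := Int.dvd_of_emod_eq_zero h0.symm
    have hkr : k ∣ r := (hco.symm).dvd_of_dvd_mul_left hdvd
    have := Int.le_of_dvd (by omega) hkr
    omega
  · omega

lemma sum_emod_sq (hk : 0 < k) (hco : IsCoprime h k) :
    ∑ r ∈ Finset.Ico (1 : ℤ) k, ((h * r) % k) ^ 2 = ∑ r ∈ Finset.Ico (1 : ℤ) k, r ^ 2 := by
  obtain ⟨u, v, huv⟩ := hco
  have hco1 : IsCoprime h k := ⟨u, v, huv⟩
  have hco2 : IsCoprime u k := ⟨h, v, by linear_combination huv⟩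
  have cancel : ∀ a b : ℤ, a * b + v * k = 1 → ∀ r ∈ Finset.Ico (1 : ℤ) k,
      (a * ((b * r) % k)) % k = r := by
    intro a b hab r hr
    rw [Finset.mem_Ico] at hr
    have m1 : (a * ((b * r) % k)) % k = (a * (b * r)) % k :=
      Int.ModEq.mul_left a (Int.emod_emod_of_dvd _ dvd_rfl)
    have m2 : a * (b * r) = r + k * (-(v * r)) := by linear_combination r * hab
    rw [m1, m2, Int.add_mul_emod_self_left]
    exact Int.emod_eq_of_lt (by omega) hr.2
  refine Finset.sum_nbij' (fun r => (h * r) % k) (fun r => (u * r) % k)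
    (fun r hr => emod_mem hk hco1 hr) (fun r hr => emod_mem hk hco2 hr)
    (fun r hr => cancel u h (by linear_combination huv) r hr)
    (fun r hr => cancel h u (by linear_combination huv) r hr)
    (fun r hr => rfl)

lemma q_pair (hk : 0 < k) (hco : IsCoprime h k) {r : ℤ}
    (hr : r ∈ Finset.Ico (1 : ℤ) k) :
    h * (k - r) / k = h - 1 - h * r / k := by
  have hmem := emod_mem hk hco hr
  rw [Finset.mem_Ico] at hmem
  have hde : k * (h * r / k) + h * r % k = h * r := Int.mul_ediv_add_emod _ _
  have e2 : h * (k - r) = (k - h * r % k) + (h - 1 - h * r / k) * k := by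
    linear_combination hde
  rw [e2, Int.add_mul_ediv_right _ _ (ne_of_gt hk),
    Int.ediv_eq_zero_of_lt (by omega) (by omega)]
  ring

lemma sum_q (hk : 0 < k) (hco : IsCoprime h k) :
    2 * ∑ r ∈ Finset.Ico (1 : ℤ) k, h * r / k = (h - 1) * (k - 1) := by
  have flip : ∑ r ∈ Finset.Ico (1 : ℤ) k, h * r / k
      = ∑ r ∈ Finset.Ico (1 : ℤ) k, h * (k - r) / k := by
    refine Finset.sum_nbij' (fun r => k - r) (fun r => k - r) ?_ ?_ ?_ ?_ ?_ <;>
      intro a ha <;> simp only [Finset.mem_Ico] at * <;> try omega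
    simp only [sub_sub_cancel]
  have flip2 : ∑ r ∈ Finset.Ico (1 : ℤ) k, h * (k - r) / k
      = ∑ r ∈ Finset.Ico (1 : ℤ) k, (h - 1 - h * r / k) :=
    Finset.sum_congr rfl fun r hr => q_pair hk hco hr
  have card : ((Finset.Ico (1 : ℤ) k).card : ℤ) = k - 1 := by
    rw [Int.card_Ico]; omega
  have e3 : ∑ r ∈ Finset.Ico (1 : ℤ) k, (h - 1 - h * r / k)
      = (k - 1) * (h - 1) - ∑ r ∈ Finset.Ico (1 : ℤ) k, h * r / k := by
    rw [Finset.sum_sub_distrib, Finset.sum_const, nsmul_eq_mul, card]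
  rw [flip, flip2] at e3 ⊢
  linarith [e3]

lemma q_lt (hh : 0 < h) (hk : 0 < k) {r : ℤ} (hr : r ∈ Finset.Ico (1 : ℤ) k) :
    h * r / k < h := by
  rw [Finset.mem_Ico] at hr
  have h1 : h * r / k ≤ h * (k - 1) / k := by
    apply Int.ediv_le_ediv hk
    nlinarith
  have h2 : h * (k - 1) / k < h := by
    apply Int.ediv_lt_of_lt_mul hk
    nlinarith
  omega

lemma double_count (hh : 0 < h) (hk : 0 < k) (hco : IsCoprime h k) :
    2 * ∑ r ∈ Finset.Ico (1 : ℤ) k, r * (h * r / k)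
      = ∑ s ∈ Finset.Ico (1 : ℤ) h,
          (k * (k - 1) - (k * s / h) ^ 2 - k * s / h) := by
  have key : ∀ r ∈ Finset.Ico (1 : ℤ) k, r * (h * r / k)
      = ∑ s ∈ Finset.Ico (1 : ℤ) h, (if k * s < h * r then r else 0) := by
    intro r hr
    have hmem := emod_mem hk hco hr
    rw [Finset.mem_Ico] at hmem
    have hde : k * (h * r / k) + h * r % k = h * r := Int.mul_ediv_add_emod _ _
    have hq0 : 0 ≤ h * r / k := by
      apply Int.ediv_nonneg _ (le_of_lt hk)
      rw [Finset.mem_Ico] at hr; nlinarith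
    have hqh : h * r / k < h := q_lt hh hk hr
    have filt : (Finset.Ico (1 : ℤ) h).filter (fun s => k * s < h * r)
        = Finset.Ico (1 : ℤ) (h * r / k + 1) := by
      ext s
      simp only [Finset.mem_filter, Finset.mem_Ico]
      constructor
      · rintro ⟨⟨h1, _⟩, h3⟩
        refine ⟨h1, ?_⟩
        nlinarith [hmem.2]
      · rintro ⟨h1, h2⟩
        have hsq : s ≤ h * r / k := by omega
        refine ⟨⟨h1, by omega⟩, ?_⟩
        nlinarith [hmem.1]
    rw [← Finset.sum_filter, filt, Finset.sum_const, Int.card_Ico,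
      nsmul_eq_mul]
    rw [Int.toNat_of_nonneg (by omega)]
    ring
  rw [Finset.sum_congr rfl key, Finset.sum_comm]
  rw [Finset.mul_sum]
  refine Finset.sum_congr rfl ?_
  intro s hs
  have hmem := emod_mem hh hco.symm hs
  rw [Finset.mem_Ico] at hmem
  have hde : h * (k * s / h) + k * s % h = k * s := Int.mul_ediv_add_emod _ _
  have he0 : 0 ≤ k * s / h := by
    apply Int.ediv_nonneg _ (le_of_lt hh)
    rw [Finset.mem_Ico] at hs; nlinarith
  have hek : k * s / h < k := q_lt hk hh hs
  have filt : (Finset.Ico (1 : ℤ) k).filter (fun r => k * s < h * r)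
      = Finset.Ico (k * s / h + 1) k := by
    ext r
    simp only [Finset.mem_filter, Finset.mem_Ico]
    constructor
    · rintro ⟨⟨_, h2⟩, h3⟩
      refine ⟨?_, h2⟩
      nlinarith [hmem.1]
    · rintro ⟨h1, h2⟩
      refine ⟨⟨by omega, h2⟩, ?_⟩
      nlinarith [hmem.2]
  rw [← Finset.sum_filter, filt]
  have split : ∑ r ∈ Finset.Ico (1 : ℤ) (k * s / h + 1), r
      + ∑ r ∈ Finset.Ico (k * s / h + 1) k, r = ∑ r ∈ Finset.Ico (1 : ℤ) k, r := by
    rw [← Finset.sum_union (Finset.Ico_disjoint_Ico_consecutive _ _ _),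
      Finset.Ico_union_Ico_eq_Ico (by omega) (by omega)]
  have g1 := sum_id k (by omega)
  have g2 := sum_id (k * s / h + 1) (by omega)
  linarith

lemma keyIV (hh : 0 < h) (hk : 0 < k) (hco : IsCoprime h k) :
    6 * (k ^ 2 * ∑ r ∈ Finset.Ico (1 : ℤ) k, (h * r / k) ^ 2)
      = (1 - h ^ 2) * (k * (k - 1) * (2 * k - 1))
        + 12 * h * k * ∑ r ∈ Finset.Ico (1 : ℤ) k, r * (h * r / k) := by
  have hperm := sum_emod_sq hk hco
  have hS2 := sum_sq k (by omega)
  have s1 : k ^ 2 * ∑ r ∈ Finset.Ico (1 : ℤ) k, (h * r / k) ^ 2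
      = h ^ 2 * ∑ r ∈ Finset.Ico (1 : ℤ) k, r ^ 2
        - 2 * h * ∑ r ∈ Finset.Ico (1 : ℤ) k, r * ((h * r) % k)
        + ∑ r ∈ Finset.Ico (1 : ℤ) k, r ^ 2 := by
    rw [Finset.mul_sum]
    rw [Finset.sum_congr rfl (fun r _ => show k ^ 2 * (h * r / k) ^ 2
      = h ^ 2 * r ^ 2 - 2 * h * (r * ((h * r) % k)) + ((h * r) % k) ^ 2 by
        linear_combination (k * (h * r / k) + h * r - (h * r) % k) * Int.mul_ediv_add_emod (h * r) k)]
    rw [Finset.sum_add_distrib, Finset.sum_sub_distrib, ← Finset.mul_sum, ← Finset.mul_sum, hperm]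
  have s2 : h * ∑ r ∈ Finset.Ico (1 : ℤ) k, r ^ 2
      = k * ∑ r ∈ Finset.Ico (1 : ℤ) k, r * (h * r / k)
        + ∑ r ∈ Finset.Ico (1 : ℤ) k, r * ((h * r) % k) := by
    rw [Finset.mul_sum, Finset.mul_sum, ← Finset.sum_add_distrib]
    refine Finset.sum_congr rfl fun r _ => ?_
    linear_combination (-r) * Int.mul_ediv_add_emod (h * r) k
  linear_combination 6 * s1 + 12 * h * s2 - (h ^ 2 - 1) * hS2

end DS

theorem dedekind_reciprocity (h k : ℤ) (hh : 0 < h) (hk : 0 < k) (hco : IsCoprime h k) :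
    dedekindSum h k + dedekindSum k h =
      ((h : ℝ) ^ 2 + k ^ 2 - 3 * h * k + 1) / (12 * h * k) := by
  have H1 := DS.sum_q hk hco
  have H2 := DS.sum_q hh hco.symm
  have H5 := DS.keyIV hh hk hco
  have H6 := DS.keyIV hk hh hco.symm
  have cardh : ((Finset.Ico (1 : ℤ) h).card : ℤ) = h - 1 := by rw [Int.card_Ico]; omega
  have cardk : ((Finset.Ico (1 : ℤ) k).card : ℤ) = k - 1 := by rw [Int.card_Ico]; omega
  have H3 : 2 * ∑ r ∈ Finset.Ico (1 : ℤ) k, r * (h * r / k)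
      = (h - 1) * (k * (k - 1)) - (∑ s ∈ Finset.Ico (1 : ℤ) h, (k * s / h) ^ 2)
        - ∑ s ∈ Finset.Ico (1 : ℤ) h, k * s / h := by
    rw [DS.double_count hh hk hco, Finset.sum_sub_distrib, Finset.sum_sub_distrib,
      Finset.sum_const, nsmul_eq_mul, cardh]
  have H4 : 2 * ∑ s ∈ Finset.Ico (1 : ℤ) h, s * (k * s / h)
      = (k - 1) * (h * (h - 1)) - (∑ r ∈ Finset.Ico (1 : ℤ) k, (h * r / k) ^ 2)
        - ∑ r ∈ Finset.Ico (1 : ℤ) k, h * r / k := by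
    rw [DS.double_count hk hh hco.symm, Finset.sum_sub_distrib, Finset.sum_sub_distrib,
      Finset.sum_const, nsmul_eq_mul, cardk]
  have key2 : 12 * (h * ∑ r ∈ Finset.Ico (1 : ℤ) k, r * (h * r / k)
        + k * ∑ s ∈ Finset.Ico (1 : ℤ) h, s * (k * s / h))
      = 8 * h ^ 2 * k ^ 2 - 9 * h ^ 2 * k - 9 * h * k ^ 2 + h ^ 2 + k ^ 2 + 9 * h * k - 1 := by
    have key : (h + k) * (12 * (h * ∑ r ∈ Finset.Ico (1 : ℤ) k, r * (h * r / k)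
          + k * ∑ s ∈ Finset.Ico (1 : ℤ) h, s * (k * s / h)))
        = (h + k) * (8 * h ^ 2 * k ^ 2 - 9 * h ^ 2 * k - 9 * h * k ^ 2
            + h ^ 2 + k ^ 2 + 9 * h * k - 1) := by
      linear_combination (-3 * k ^ 2) * H1 + (-3 * h ^ 2) * H2 + (6 * h ^ 2) * H3
        + (6 * k ^ 2) * H4 - H5 - H6
    exact mul_left_cancel₀ (by omega : h + k ≠ 0) key
  -- real side
  have hkR : ((k : ℝ)) ≠ 0 := by exact_mod_cast (by omega : k ≠ 0)
  have hhR : ((h : ℝ)) ≠ 0 := by exact_mod_cast (by omega : h ≠ 0)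
  have Ek : ∀ (h k : ℤ), 0 < h → 0 < k → IsCoprime h k →
      2 * (k : ℝ) ^ 2 * dedekindSum h k
        = 2 * (h : ℝ) * ((∑ r ∈ Finset.Ico (1 : ℤ) k, r ^ 2 : ℤ) : ℝ)
          - 2 * (k : ℝ) * ((∑ r ∈ Finset.Ico (1 : ℤ) k, r * (h * r / k) : ℤ) : ℝ)
          - (k : ℝ) * ((∑ r ∈ Finset.Ico (1 : ℤ) k, r : ℤ) : ℝ) := by
    clear * -
    intro h k hh hk hco
    have hkR : ((k : ℝ)) ≠ 0 := by exact_mod_cast (by omega : k ≠ 0)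
    have point : ∀ r ∈ Finset.Ico (1 : ℤ) k,
        2 * (k : ℝ) ^ 2 * (((r : ℝ) / k) * ((h * r : ℝ) / k - ⌊(h * r : ℝ) / k⌋ - 1 / 2))
          = 2 * (h : ℝ) * ((r ^ 2 : ℤ) : ℝ) - 2 * (k : ℝ) * (((r * (h * r / k) : ℤ)) : ℝ)
            - (k : ℝ) * ((r : ℤ) : ℝ) := by
      intro r hr
      have hfl := DS.floor_div (h * r) k hk
      push_cast at hfl
      rw [hfl]
      push_cast
      field_simp
    rw [dedekindSum, Finset.mul_sum, Finset.sum_congr rfl point,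
      Finset.sum_sub_distrib, Finset.sum_sub_distrib,
      ← Finset.mul_sum, ← Finset.mul_sum, ← Finset.mul_sum]
    push_cast
    ring
  have Ekk := Ek h k hh hk hco
  have Ehh := Ek k h hk hh hco.symm
  have dk : dedekindSum h k
      = (2 * (h : ℝ) * ((∑ r ∈ Finset.Ico (1 : ℤ) k, r ^ 2 : ℤ) : ℝ)
          - 2 * (k : ℝ) * ((∑ r ∈ Finset.Ico (1 : ℤ) k, r * (h * r / k) : ℤ) : ℝ)
          - (k : ℝ) * ((∑ r ∈ Finset.Ico (1 : ℤ) k, r : ℤ) : ℝ)) / (2 * (k : ℝ) ^ 2) := by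
    rw [eq_div_iff (by simp [hkR])]
    linarith [Ekk]
  have dh : dedekindSum k h
      = (2 * (k : ℝ) * ((∑ s ∈ Finset.Ico (1 : ℤ) h, s ^ 2 : ℤ) : ℝ)
          - 2 * (h : ℝ) * ((∑ s ∈ Finset.Ico (1 : ℤ) h, s * (k * s / h) : ℤ) : ℝ)
          - (h : ℝ) * ((∑ s ∈ Finset.Ico (1 : ℤ) h, s : ℤ) : ℝ)) / (2 * (h : ℝ) ^ 2) := by
    rw [eq_div_iff (by simp [hhR])]
    linarith [Ehh]
  have c1 : (2 : ℝ) * ((∑ r ∈ Finset.Ico (1 : ℤ) k, r : ℤ) : ℝ) = (k : ℝ) * ((k : ℝ) - 1) := by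
    exact_mod_cast congrArg (fun z : ℤ => (z : ℝ)) (DS.sum_id k (by omega))
  have c2 : (6 : ℝ) * ((∑ r ∈ Finset.Ico (1 : ℤ) k, r ^ 2 : ℤ) : ℝ)
      = (k : ℝ) * ((k : ℝ) - 1) * (2 * (k : ℝ) - 1) := by
    exact_mod_cast congrArg (fun z : ℤ => (z : ℝ)) (DS.sum_sq k (by omega))
  have c3 : (2 : ℝ) * ((∑ s ∈ Finset.Ico (1 : ℤ) h, s : ℤ) : ℝ) = (h : ℝ) * ((h : ℝ) - 1) := by
    exact_mod_cast congrArg (fun z : ℤ => (z : ℝ)) (DS.sum_id h (by omega))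
  have c4 : (6 : ℝ) * ((∑ s ∈ Finset.Ico (1 : ℤ) h, s ^ 2 : ℤ) : ℝ)
      = (h : ℝ) * ((h : ℝ) - 1) * (2 * (h : ℝ) - 1) := by
    exact_mod_cast congrArg (fun z : ℤ => (z : ℝ)) (DS.sum_sq h (by omega))
  have c5 : (12 : ℝ) * ((h : ℝ) * ((∑ r ∈ Finset.Ico (1 : ℤ) k, r * (h * r / k) : ℤ) : ℝ)
        + (k : ℝ) * ((∑ s ∈ Finset.Ico (1 : ℤ) h, s * (k * s / h) : ℤ) : ℝ))
      = 8 * (h : ℝ) ^ 2 * (k : ℝ) ^ 2 - 9 * (h : ℝ) ^ 2 * (k : ℝ) - 9 * (h : ℝ) * (k : ℝ) ^ 2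
        + (h : ℝ) ^ 2 + (k : ℝ) ^ 2 + 9 * (h : ℝ) * (k : ℝ) - 1 := by
    exact_mod_cast congrArg (fun z : ℤ => (z : ℝ)) key2
  rw [dk, dh, div_add_div _ _ (by simp [hkR]) (by simp [hhR]),
    div_eq_div_iff (by simp [hkR, hhR]) (by positivity)]
  linear_combination (-12 * (h:ℝ) ^ 3 * (k:ℝ) ^ 2) * c1 + (8 * (h:ℝ) ^ 4 * (k:ℝ)) * c2
    + (-12 * (k:ℝ) ^ 3 * (h:ℝ) ^ 2) * c3 + (8 * (k:ℝ) ^ 4 * (h:ℝ)) * c4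
    + (-4 * (h:ℝ) ^ 2 * (k:ℝ) ^ 2) * c5
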